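/- Let 0 ≤ a ≤ b, t > 0, and h_t(λ) = (t/√π) ∫_a^b exp(-t²(λ-ρ)²) dρ. For λ > b one has |h_t(λ)| ≤ s(t(λ-b)) with s(ρ) = exp(-ρ²)/(2√π·ρ), and for a < λ < b one has |h_t(λ) - 1| ≤ s(t(λ-a)) + s(t(b-λ)). -/

import Mathlib

open Real MeasureTheory Set Filter

lemma gauss_integrable : MeasureTheory.Integrable (fun u : ℝ => Real.exp (-u ^ 2)) := by
  have := integrable_exp_neg_mul_sq (b := 1) one_pos
  simpa using this

lemma gauss_tail (c : ℝ) (hc : 0 < c) :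
    ∫ u in Set.Ioi c, Real.exp (-u ^ 2) ≤ Real.exp (-c ^ 2) / (2 * c) := by
  have hI0 : MeasureTheory.Integrable (fun u : ℝ => u * Real.exp (-u ^ 2)) := by
    have := integrable_mul_exp_neg_mul_sq (b := 1) one_pos
    simpa using this
  have hI : MeasureTheory.IntegrableOn (fun u : ℝ => u * Real.exp (-u ^ 2)) (Set.Ioi c) :=
    hI0.integrableOn
  have hI2 : MeasureTheory.IntegrableOn (fun u : ℝ => (u / c) * Real.exp (-u ^ 2))
      (Set.Ioi c) :=
    MeasureTheory.IntegrableOn.congr_fun (hI.div_const c) (fun u _ => by ring) measurableSet_Ioi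
  have key : ∫ u in Set.Ioi c, u * Real.exp (-u ^ 2) = Real.exp (-c ^ 2) / 2 := by
    have hderiv : ∀ x ∈ Set.Ioi c, HasDerivAt (fun u : ℝ => -Real.exp (-u ^ 2) / 2)
        (x * Real.exp (-x ^ 2)) x := by
      intro x _
      have h1 : HasDerivAt (fun u : ℝ => -u ^ 2) (-(2 * x)) x := by
        exact (hasDerivAt_pow 2 x).neg.congr_deriv (by norm_num)
      have h2 := (h1.exp).neg.div_const 2
      refine h2.congr_deriv ?_
      ring
    have hcont : ContinuousWithinAt (fun u : ℝ => -Real.exp (-u ^ 2) / 2) (Set.Ici c) c :=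
      (Continuous.continuousWithinAt (by continuity))
    have htend : Filter.Tendsto (fun u : ℝ => -Real.exp (-u ^ 2) / 2) Filter.atTop (nhds 0) := by
      have : Filter.Tendsto (fun u : ℝ => -u ^ 2) Filter.atTop Filter.atBot := by
        simpa using (Filter.tendsto_pow_atTop (two_ne_zero)).neg
      have := (Real.tendsto_exp_atBot.comp this).neg.div_const 2
      simpa using this
    have := MeasureTheory.integral_Ioi_of_hasDerivAt_of_tendsto hcont hderiv hI htend
    rw [this]; ring
  calc ∫ u in Set.Ioi c, Real.exp (-u ^ 2)
      ≤ ∫ u in Set.Ioi c, (u / c) * Real.exp (-u ^ 2) := by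
        apply MeasureTheory.setIntegral_mono_on gauss_integrable.integrableOn hI2
          measurableSet_Ioi
        intro u hu
        have h1 : (1 : ℝ) ≤ u / c := (one_le_div hc).2 (le_of_lt hu)
        nlinarith [Real.exp_pos (-u ^ 2)]
    _ = (1 / c) * ∫ u in Set.Ioi c, u * Real.exp (-u ^ 2) := by
        rw [← MeasureTheory.integral_const_mul]
        congr 1; ext u; ring
    _ = Real.exp (-c ^ 2) / (2 * c) := by rw [key]; field_simp

lemma gauss_Iic_tail (c : ℝ) (hc : c < 0) :
    ∫ u in Set.Iic c, Real.exp (-u ^ 2) ≤ Real.exp (-(-c) ^ 2) / (2 * (-c)) := by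
  have h1 : (∫ u in Set.Iic c, Real.exp (-u ^ 2)) = ∫ u in Set.Ioi (-c), Real.exp (-u ^ 2) := by
    rw [← integral_comp_neg_Iic c (fun x => Real.exp (-x ^ 2))]
    simp
  rw [h1]
  exact gauss_tail (-c) (by linarith)

theorem gaussian_mollified_indicator_right_tail_and_interior (a b t : ℝ) (ha : 0 ≤ a)
    (hab : a ≤ b) (ht : 0 < t) :
    (∀ l : ℝ, b < l →
      |(t / Real.sqrt π) * ∫ ρ in a..b, Real.exp (-t ^ 2 * (l - ρ) ^ 2)| ≤
        Real.exp (-(t * (l - b)) ^ 2) / (2 * Real.sqrt π * (t * (l - b)))) ∧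
    (∀ l : ℝ, a < l → l < b →
      |((t / Real.sqrt π) * ∫ ρ in a..b, Real.exp (-t ^ 2 * (l - ρ) ^ 2)) - 1| ≤
        Real.exp (-(t * (l - a)) ^ 2) / (2 * Real.sqrt π * (t * (l - a))) +
          Real.exp (-(t * (b - l)) ^ 2) / (2 * Real.sqrt π * (t * (b - l)))) := by
  have hπ : 0 < Real.sqrt π := Real.sqrt_pos.2 Real.pi_pos
  have hg := gauss_integrable
  have key : ∀ l : ℝ, (t / Real.sqrt π) * ∫ ρ in a..b, Real.exp (-t ^ 2 * (l - ρ) ^ 2)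
      = (∫ u in t * (l - b)..t * (l - a), Real.exp (-u ^ 2)) / Real.sqrt π := by
    intro l
    have h1 : (∫ ρ in a..b, Real.exp (-t ^ 2 * (l - ρ) ^ 2))
        = ∫ ρ in a..b, (fun x => Real.exp (-(t * x) ^ 2)) (l - ρ) := by
      congr 1; ext ρ; congr 1; ring
    rw [h1, intervalIntegral.integral_comp_sub_left (fun x => Real.exp (-(t * x) ^ 2)) l,
      intervalIntegral.integral_comp_mul_left (fun u => Real.exp (-u ^ 2)) ht.ne',
      smul_eq_mul]
    field_simp
  constructor
  · intro l hl
    set c := t * (l - b) with hc_def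
    have hc : 0 < c := mul_pos ht (by linarith)
    have hcd : c ≤ t * (l - a) := by nlinarith
    rw [key l]
    have hJ0 : 0 ≤ ∫ u in c..t * (l - a), Real.exp (-u ^ 2) :=
      intervalIntegral.integral_nonneg hcd (fun u _ => (Real.exp_pos _).le)
    rw [abs_of_nonneg (div_nonneg hJ0 hπ.le)]
    have hJle : (∫ u in c..t * (l - a), Real.exp (-u ^ 2))
        ≤ ∫ u in Set.Ioi c, Real.exp (-u ^ 2) := by
      rw [intervalIntegral.integral_of_le hcd]
      refine MeasureTheory.setIntegral_mono_set hg.integrableOn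
        (Filter.Eventually.of_forall fun u => (Real.exp_pos _).le)
        (HasSubset.Subset.eventuallyLE Set.Ioc_subset_Ioi_self)
    calc (∫ u in c..t * (l - a), Real.exp (-u ^ 2)) / Real.sqrt π
        ≤ (Real.exp (-c ^ 2) / (2 * c)) / Real.sqrt π := by
          gcongr
          exact hJle.trans (gauss_tail c hc)
      _ = Real.exp (-c ^ 2) / (2 * Real.sqrt π * c) := by
          rw [div_div]; ring_nf
  · intro l hla hlb
    set c2 := t * (l - a) with hc2_def
    set c3 := t * (b - l) with hc3_def
    have hc2 : 0 < c2 := mul_pos ht (by linarith)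
    have hc3 : 0 < c3 := mul_pos ht (by linarith)
    have hc1 : t * (l - b) = -c3 := by rw [hc3_def]; ring
    have hRI : (∫ u : ℝ, Real.exp (-u ^ 2)) = Real.sqrt π := by
      have := integral_gaussian 1
      simpa using this
    set A := ∫ u in Set.Iic (-c3), Real.exp (-u ^ 2) with hA_def
    set B := ∫ u in Set.Ioi c2, Real.exp (-u ^ 2) with hB_def
    have hsplit : A + (∫ u in (-c3)..c2, Real.exp (-u ^ 2)) + B = Real.sqrt π := by
      have h1 : (∫ u in (-c3)..c2, Real.exp (-u ^ 2))
          = (∫ u in Set.Iic c2, Real.exp (-u ^ 2)) - A :=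
        (intervalIntegral.integral_Iic_sub_Iic hg.integrableOn hg.integrableOn).symm
      have h2 : (∫ u in Set.Iic c2, Real.exp (-u ^ 2)) + B = Real.sqrt π := by
        rw [hB_def, intervalIntegral.integral_Iic_add_Ioi hg.integrableOn hg.integrableOn, hRI]
      rw [h1]; linarith
    have hA0 : 0 ≤ A := MeasureTheory.setIntegral_nonneg measurableSet_Iic
      (fun u _ => (Real.exp_pos _).le)
    have hB0 : 0 ≤ B := MeasureTheory.setIntegral_nonneg measurableSet_Ioi
      (fun u _ => (Real.exp_pos _).le)
    rw [key l, hc1]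
    have heq : (∫ u in (-c3)..c2, Real.exp (-u ^ 2)) / Real.sqrt π - 1
        = -((A + B) / Real.sqrt π) := by
      field_simp
      linarith
    rw [heq, abs_neg, abs_of_nonneg (div_nonneg (by linarith) hπ.le)]
    have hAle : A ≤ Real.exp (-c3 ^ 2) / (2 * c3) := by
      have := gauss_Iic_tail (-c3) (by linarith)
      simpa using this
    have hBle : B ≤ Real.exp (-c2 ^ 2) / (2 * c2) := by
      have hJle : B ≤ ∫ u in Set.Ioi c2, Real.exp (-u ^ 2) := le_refl _
      exact hJle.trans (gauss_tail c2 hc2)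
    calc (A + B) / Real.sqrt π
        ≤ (Real.exp (-c3 ^ 2) / (2 * c3) + Real.exp (-c2 ^ 2) / (2 * c2)) / Real.sqrt π := by
          have h := add_le_add hAle hBle
          exact div_le_div_of_nonneg_right h hπ.le
      _ = Real.exp (-c2 ^ 2) / (2 * Real.sqrt π * c2)
          + Real.exp (-c3 ^ 2) / (2 * Real.sqrt π * c3) := by
          field_simp
          ring
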